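/- Let V : ℝ → ℝ be differentiable on [0, ∞) with V(t) ≥ 0 for all t ≥ 0, and suppose there are constants γ₁ > 0, γ₂ > 0 and r ∈ (0, 1) such that V'(t) ≤ −γ₁·V(t) − γ₂·(V(t))^r for all t ≥ 0. Then V(t) = 0 for all t ≥ T, where T := (1/(γ₁·(1−r)))·ln((γ₁·V(0)^{1−r} + γ₂)/γ₂). -/

import Mathlib

/-- Strengthened finite-time Lyapunov criterion: if `V' ≤ -γ₁ V - γ₂ V^r` with `r ∈ (0,1)`,
then `V` reaches zero by time `T = (1/(γ₁ (1-r))) ln((γ₁ V(0)^(1-r) + γ₂)/γ₂)`. -/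
theorem lyapunov_finite_time_linear_plus_fractional
    (V : ℝ → ℝ) (γ₁ γ₂ r : ℝ) (hγ₁ : 0 < γ₁) (hγ₂ : 0 < γ₂) (hr0 : 0 < r) (hr1 : r < 1)
    (hdiff : ∀ t ≥ (0:ℝ), DifferentiableAt ℝ V t)
    (hnonneg : ∀ t ≥ (0:ℝ), 0 ≤ V t)
    (hineq : ∀ t ≥ (0:ℝ), deriv V t ≤ -γ₁ * V t - γ₂ * (V t) ^ r) :
    ∀ t ≥ (1 / (γ₁ * (1 - r))) * Real.log ((γ₁ * (V 0) ^ (1 - r) + γ₂) / γ₂), V t = 0 := by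
  intro t₀ ht₀
  have h1r : 0 < 1 - r := by linarith
  have hc : 0 < γ₁ * (1 - r) := mul_pos hγ₁ h1r
  set c := γ₁ * (1 - r) with hcdef
  have hV0 : 0 ≤ V 0 := hnonneg 0 le_rfl
  set A := (γ₁ * (V 0) ^ (1 - r) + γ₂) / γ₂ with hA
  have hA1 : (1:ℝ) ≤ A := by
    rw [hA, le_div_iff₀ hγ₂]
    have : 0 ≤ γ₁ * (V 0) ^ (1 - r) := mul_nonneg hγ₁.le (Real.rpow_nonneg hV0 _)
    linarith
  have hT0 : 0 ≤ 1 / c * Real.log A :=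
    mul_nonneg (by positivity) (Real.log_nonneg hA1)
  have ht₀0 : 0 ≤ t₀ := le_trans hT0 ht₀
  by_contra hne
  have hVt₀ : 0 < V t₀ := lt_of_le_of_ne (hnonneg t₀ ht₀0) (Ne.symm hne)
  have hanti : AntitoneOn V (Set.Ici 0) := by
    apply antitoneOn_of_deriv_nonpos (convex_Ici 0)
    · exact fun s hs => (hdiff s hs).continuousAt.continuousWithinAt
    · intro s hs
      rw [interior_Ici] at hs
      exact (hdiff s hs.le).differentiableWithinAt
    · intro s hs
      rw [interior_Ici] at hs
      have hv := hnonneg s hs.le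
      have hvr : 0 ≤ (V s) ^ r := Real.rpow_nonneg hv r
      have := hineq s hs.le
      nlinarith
  have hpos : ∀ s ∈ Set.Icc (0:ℝ) t₀, 0 < V s := fun s hs =>
    lt_of_lt_of_le hVt₀ (hanti hs.1 ht₀0 hs.2)
  set g : ℝ → ℝ := fun s => Real.exp (c * s) * ((V s) ^ (1 - r) + γ₂ / γ₁) with hg
  have hderiv : ∀ s, 0 ≤ s → 0 < V s →
      HasDerivAt g (c * Real.exp (c * s) * ((V s) ^ (1 - r) + γ₂ / γ₁)
        + Real.exp (c * s) * (deriv V s * ((1 - r) * (V s) ^ (1 - r - 1)))) s := by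
    intro s hs hVs
    have he : HasDerivAt (fun s => Real.exp (c * s)) (Real.exp (c * s) * (c * 1)) s :=
      ((hasDerivAt_id s).const_mul c).exp
    have hw : HasDerivAt (fun s => (V s) ^ (1 - r) + γ₂ / γ₁)
        (deriv V s * (1 - r) * (V s) ^ (1 - r - 1)) s :=
      ((hdiff s hs).hasDerivAt.rpow_const (Or.inl hVs.ne')).add_const (γ₂ / γ₁)
    have := he.mul hw
    refine this.congr_deriv ?_
    ring
  have hganti : AntitoneOn g (Set.Icc 0 t₀) := by
    apply antitoneOn_of_deriv_nonpos (convex_Icc 0 t₀)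
    · intro s hs
      exact (hderiv s hs.1 (hpos s hs)).differentiableAt.continuousAt.continuousWithinAt
    · intro s hs
      rw [interior_Icc] at hs
      exact (hderiv s hs.1.le (hpos s ⟨hs.1.le, hs.2.le⟩)).differentiableAt.differentiableWithinAt
    · intro s hs
      rw [interior_Icc] at hs
      have hVs := hpos s ⟨hs.1.le, hs.2.le⟩
      rw [(hderiv s hs.1.le hVs).deriv]
      have hE : 0 < Real.exp (c * s) := Real.exp_pos _
      have hX : 0 < (V s) ^ (1 - r - 1) := Real.rpow_pos_of_pos hVs _
      have hi := hineq s hs.1.le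
      have e1 : (V s) ^ (-r) * V s ^ (1:ℝ) = (V s) ^ (1 - r) := by
        rw [← Real.rpow_add hVs]; norm_num; congr 1; ring
      rw [Real.rpow_one] at e1
      have e2 : (V s) ^ (-r) * (V s) ^ r = 1 := by
        rw [← Real.rpow_add hVs]; norm_num
      have key : c * ((V s) ^ (1 - r) + γ₂ / γ₁)
          + (-γ₁ * V s - γ₂ * (V s) ^ r) * ((1 - r) * (V s) ^ (1 - r - 1)) = 0 := by
        rw [hcdef, show (1:ℝ) - r - 1 = -r by ring]
        field_simp
        linear_combination (-(γ₁ * (1 - r))) * e1 - (γ₂ * (1 - r)) * e2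
      have hmul : Real.exp (c * s) * (deriv V s * ((1 - r) * (V s) ^ (1 - r - 1)))
          ≤ Real.exp (c * s) * ((-γ₁ * V s - γ₂ * (V s) ^ r) * ((1 - r) * (V s) ^ (1 - r - 1))) := by
        apply mul_le_mul_of_nonneg_left _ hE.le
        apply mul_le_mul_of_nonneg_right hi
        positivity
      have hzero : c * Real.exp (c * s) * ((V s) ^ (1 - r) + γ₂ / γ₁)
          + Real.exp (c * s) * ((-γ₁ * V s - γ₂ * (V s) ^ r) * ((1 - r) * (V s) ^ (1 - r - 1))) = 0 := by
        linear_combination (Real.exp (c * s)) * key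
      linarith
  have hg0 : g t₀ ≤ g 0 := hganti ⟨le_rfl, ht₀0⟩ ⟨ht₀0, le_rfl⟩ ht₀0
  have hgv0 : g 0 = (V 0) ^ (1 - r) + γ₂ / γ₁ := by
    simp [hg]
  have hexp : A ≤ Real.exp (c * t₀) := by
    have : c * (1 / c * Real.log A) ≤ c * t₀ :=
      mul_le_mul_of_nonneg_left ht₀ hc.le
    have hEq : c * (1 / c * Real.log A) = Real.log A := by
      field_simp
    calc A = Real.exp (Real.log A) := (Real.exp_log (by linarith)).symm
      _ ≤ Real.exp (c * t₀) := Real.exp_le_exp.mpr (by rw [← hEq]; exact this)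
  have hWt₀ : 0 < (V t₀) ^ (1 - r) := Real.rpow_pos_of_pos hVt₀ _
  have hlb : A * (γ₂ / γ₁) < g t₀ := by
    have h1 : A * (γ₂ / γ₁) < A * ((V t₀) ^ (1 - r) + γ₂ / γ₁) := by
      apply mul_lt_mul_of_pos_left _ (by linarith)
      linarith
    have h2 : A * ((V t₀) ^ (1 - r) + γ₂ / γ₁) ≤ g t₀ := by
      apply mul_le_mul_of_nonneg_right hexp
      positivity
    linarith
  have hAeq : A * (γ₂ / γ₁) = (V 0) ^ (1 - r) + γ₂ / γ₁ := by
    rw [hA]; field_simp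
  rw [hAeq] at hlb
  rw [hgv0] at hg0
  linarith
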